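/- Every robust incentive compatible strategy is strongly myopically optimal at every chain that lies on a best response: if σ is robust, H ∈ BR(h₀, H₋₁, σ), and σ(H) failed to maximize V_d(H₋₁, ·) subject to V_e(H₋₁, 𝔠) ≥ V̄_e(H, σ) (the maximal expert value achievable by any best response of any type strictly coarser than H₋₁), then the H-deviation that offers a strongly myopically optimal contract 𝔠' at H and at all extensions of H would strictly improve the worst-case V_d, contradicting robustness. -/

import Mathlib

/-- A consistent sequence: a nonempty, strictly increasing chain beginning at `h₀`. -/
def Cons {𝓗 : Type} [Preorder 𝓗] (h₀ : 𝓗) (H : List 𝓗) : Prop :=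
  H ≠ [] ∧ H.head? = some h₀ ∧ H.Chain' (· < ·)

/-- Membership in `𝓗(h₀, h)`. -/
def Memb {𝓗 : Type} [Preorder 𝓗] (h₀ h : 𝓗) (H : List 𝓗) : Prop :=
  Cons h₀ H ∧ H.getLastD h₀ ≤ h

/-- The value to a player (with contract-value functional `V`) of the chain `H`
under strategy `σ`: the value of the contract offered at the final revelation. -/
def val {𝓗 : Type} [Preorder 𝓗] (h₀ : 𝓗) {C : 𝓗 → Type} (V : (h : 𝓗) → C h → ℝ)
    (σ : (H : List 𝓗) → C (H.getLastD h₀)) (H : List 𝓗) : ℝ :=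
  V (H.getLastD h₀) (σ H)

/-- `H` is a best response to `σ` for type `h`. -/
def BRs {𝓗 : Type} [Preorder 𝓗] (h₀ : 𝓗) {C : 𝓗 → Type} (Ve : (h : 𝓗) → C h → ℝ)
    (σ : (H : List 𝓗) → C (H.getLastD h₀)) (h : 𝓗) (H : List 𝓗) : Prop :=
  Memb h₀ h H ∧ ∀ H', Memb h₀ h H' → val h₀ Ve σ H' ≤ val h₀ Ve σ H

/-- Incentive compatibility: expert value monotone along extensions. -/
def ICs {𝓗 : Type} [Preorder 𝓗] (h₀ : 𝓗) {C : 𝓗 → Type} (Ve : (h : 𝓗) → C h → ℝ)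
    (σ : (H : List 𝓗) → C (H.getLastD h₀)) : Prop :=
  ∀ H H' : List 𝓗, Cons h₀ H → H' ≠ [] → H' <+: H → val h₀ Ve σ H' ≤ val h₀ Ve σ H

/-- `H` is reachable under `σ`: extended by some best response of some type. -/
def Reach {𝓗 : Type} [Preorder 𝓗] (h₀ : 𝓗) {C : 𝓗 → Type} (Ve : (h : 𝓗) → C h → ℝ)
    (σ : (H : List 𝓗) → C (H.getLastD h₀)) (H : List 𝓗) : Prop :=
  ∃ (h : 𝓗) (H' : List 𝓗), BRs h₀ Ve σ h H' ∧ H <+: H'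

/-- `σ'` is an `H`-deviation from `σ`: it agrees with `σ` on all chains with
strictly coarser final element, and differs at `H`. -/
def Dev {𝓗 : Type} [Preorder 𝓗] (h₀ : 𝓗) {C : 𝓗 → Type}
    (σ σ' : (H : List 𝓗) → C (H.getLastD h₀)) (H : List 𝓗) : Prop :=
  (∀ H' : List 𝓗, Cons h₀ H' → H'.getLastD h₀ < H.getLastD h₀ → σ' H' = σ H') ∧ σ' H ≠ σ H

/-- Robustness: at every reachable chain, the worst case (over best-response
extensions) of `σ` is at least the worst case (over all extensions) of any
incentive compatible `H`-deviation. -/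
def Robust {𝓗 : Type} [Preorder 𝓗] (h₀ : 𝓗) {C : 𝓗 → Type} (Vd Ve : (h : 𝓗) → C h → ℝ)
    (σ : (H : List 𝓗) → C (H.getLastD h₀)) : Prop :=
  ∀ H : List 𝓗, Cons h₀ H → Reach h₀ Ve σ H →
    ∀ σ' : (H : List 𝓗) → C (H.getLastD h₀), ICs h₀ Ve σ' → Dev h₀ σ σ' H →
      sInf {x : ℝ | ∃ H' : List 𝓗, Cons h₀ H' ∧ H <+: H' ∧ x = val h₀ Vd σ' H'} ≤
      sInf {x : ℝ | ∃ (h : 𝓗) (H' : List 𝓗), BRs h₀ Ve σ h H' ∧ H <+: H' ∧ x = val h₀ Vd σ H'}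


section MyAux

variable {𝓗 : Type} [PartialOrder 𝓗] {h₀ : 𝓗}

lemma myGetLastD_eq_getLast {l : List 𝓗} (h : l ≠ []) (d : 𝓗) :
    l.getLastD d = l.getLast h := by
  rw [List.getLastD_eq_getLast?, List.getLast?_eq_getLast h, Option.getD_some]

lemma myLastD_lt_of_proper_prefix {K H : List 𝓗} (hch : H.Chain' (· < ·))
    (hK : K ≠ []) (hpre : K <+: H) (hne : K ≠ H) (d : 𝓗) :
    K.getLastD d < H.getLastD d := by
  obtain ⟨t, rfl⟩ := hpre
  have ht : t ≠ [] := by rintro rfl; simp at hne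
  have hpw := (List.isChain_iff_pairwise).mp hch
  have hmemK : K.getLastD d ∈ K := by
    rw [myGetLastD_eq_getLast hK]; exact List.getLast_mem hK
  have hmemt : t.getLastD d ∈ t := by
    rw [myGetLastD_eq_getLast ht]; exact List.getLast_mem ht
  have hKt : (K ++ t).getLastD d = t.getLastD d := by
    rw [myGetLastD_eq_getLast (by simp [hK] : K ++ t ≠ []),
      myGetLastD_eq_getLast ht]
    exact List.getLast_append_of_ne_nil _ ht
  rw [hKt]
  exact ((List.pairwise_append.mp hpw).2.2) _ hmemK _ hmemt

lemma myLastD_le_of_prefix {K H : List 𝓗} (hch : H.Chain' (· < ·))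
    (hK : K ≠ []) (hpre : K <+: H) (d : 𝓗) :
    K.getLastD d ≤ H.getLastD d := by
  by_cases h : K = H
  · subst h; exact le_refl _
  · exact le_of_lt (myLastD_lt_of_proper_prefix hch hK hpre h d)

lemma myCons_of_prefix {K H : List 𝓗} (hH : Cons h₀ H) (hpre : K <+: H)
    (hK : K ≠ []) : Cons h₀ K := by
  refine ⟨hK, ?_, hH.2.2.prefix hpre⟩
  obtain ⟨t, rfl⟩ := hpre
  cases K with
  | nil => exact absurd rfl hK
  | cons a K' =>
    have := hH.2.1
    simpa using this

lemma myCons_first {H : List 𝓗} (hH : Cons h₀ H) : h₀ ≤ H.getLastD h₀ := by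
  have hpre : [h₀] <+: H := by
    cases H with
    | nil => exact absurd rfl hH.1
    | cons a t =>
      have := hH.2.1
      simp only [List.head?_cons, Option.some.injEq] at this
      subst this
      exact ⟨t, rfl⟩
  have := myLastD_le_of_prefix hH.2.2 (by simp) hpre h₀
  simpa using this

lemma myFinite_cons [Fintype 𝓗] : {L : List 𝓗 | Cons h₀ L}.Finite := by
  apply (List.finite_length_le 𝓗 (Fintype.card 𝓗)).subset
  intro L hL
  have hpw := (List.isChain_iff_pairwise).mp hL.2.2
  exact List.Nodup.length_le_card (List.Pairwise.imp ne_of_lt hpw)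

lemma myExists_BR [Fintype 𝓗] {C : 𝓗 → Type} (Ve : (h : 𝓗) → C h → ℝ)
    (σ : (H : List 𝓗) → C (H.getLastD h₀)) {h : 𝓗} (hh : h₀ ≤ h) :
    ∃ Hs, BRs h₀ Ve σ h Hs := by
  have hfin : {L : List 𝓗 | Memb h₀ h L}.Finite :=
    myFinite_cons.subset fun L hL => hL.1
  have hmem : [h₀] ∈ {L : List 𝓗 | Memb h₀ h L} := by
    refine ⟨⟨by simp, rfl, List.isChain_singleton h₀⟩, by simpa using hh⟩
  obtain ⟨L, hL, hmax⟩ := Set.exists_max_image _ (val h₀ Ve σ) hfin ⟨[h₀], hmem⟩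
  exact ⟨L, hL, fun H' hH' => hmax H' hH'⟩

end MyAux

/-- Lemma A.2: every robust incentive compatible strategy is
strongly myopically optimal at every best-response chain: at such `H`, `σ H`
maximizes `Vd` subject to `Ve ≥ V̄e(H, σ)`, the maximal expert value achievable
by any best response of any type strictly coarser than `H₋₁`. -/
theorem robust_implies_strongly_myopic
    {𝓗 : Type} [Fintype 𝓗] [PartialOrder 𝓗] (h₀ : 𝓗)
    (C : 𝓗 → Type) (Vd Ve : (h : 𝓗) → C h → ℝ)
    (pb : ∀ {h h' : 𝓗}, h ≤ h' → C h → C h')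
    (hpbd : ∀ {h h' : 𝓗} (l : h ≤ h') (c : C h), Vd h' (pb l c) = Vd h c)
    (hpbe : ∀ {h h' : 𝓗} (l : h ≤ h') (c : C h), Ve h' (pb l c) = Ve h c)
    (σ : (H : List 𝓗) → C (H.getLastD h₀))
    (hIC : ICs h₀ Ve σ) (hrob : Robust h₀ Vd Ve σ) :
    ∀ H : List 𝓗, Cons h₀ H → BRs h₀ Ve σ (H.getLastD h₀) H →
      ∀ c : C (H.getLastD h₀),
        (2 ≤ H.length →
          sSup {x : ℝ | ∃ (h : 𝓗) (H' : List 𝓗),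
              h < H.getLastD h₀ ∧ BRs h₀ Ve σ h H' ∧ x = val h₀ Ve σ H'} ≤
            Ve (H.getLastD h₀) c) →
        Vd (H.getLastD h₀) c ≤ val h₀ Vd σ H := by
  intro H hcons hBR c hcon
  classical
  have hHne : H ≠ [] := hcons.1
  by_cases hceq : pb (le_refl (H.getLastD h₀)) c = σ H
  · have : Vd (H.getLastD h₀) c = val h₀ Vd σ H := by
      rw [← hpbd (le_refl (H.getLastD h₀)) c, hceq]; rfl
    exact le_of_eq this
  · -- the deviation: play (a pullback of) c at H and at all extensions of H
    set σ' : (K : List 𝓗) → C (K.getLastD h₀) := fun K =>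
      if hex : H <+: K ∧ H.getLastD h₀ ≤ K.getLastD h₀ then pb hex.2 c else σ K
      with hσ'def
    have key : ∀ K, Cons h₀ K → H <+: K →
        ∃ l : H.getLastD h₀ ≤ K.getLastD h₀, σ' K = pb l c := by
      intro K hK hp
      have l := myLastD_le_of_prefix hK.2.2 hHne hp h₀
      refine ⟨l, ?_⟩
      simp only [hσ'def]
      exact dif_pos ⟨hp, l⟩
    have hnp : ∀ K, ¬ (H <+: K) → σ' K = σ K := by
      intro K h
      simp only [hσ'def]
      exact dif_neg fun hx => h hx.1
    -- bddAbove of the sSup set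
    have hbddA : BddAbove {x : ℝ | ∃ (h : 𝓗) (H' : List 𝓗),
        h < H.getLastD h₀ ∧ BRs h₀ Ve σ h H' ∧ x = val h₀ Ve σ H'} := by
      refine BddAbove.mono ?_ ((myFinite_cons (h₀ := h₀)).image (val h₀ Ve σ)).bddAbove
      rintro x ⟨h, H', _, hBR', rfl⟩
      exact ⟨H', hBR'.1.1, rfl⟩
    -- σ' is incentive compatible
    have hIC' : ICs h₀ Ve σ' := by
      intro H1 H2 hc1 hne2 hp
      have hc2 : Cons h₀ H2 := myCons_of_prefix hc1 hp hne2
      by_cases h1 : H <+: H1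
      · have e1 : val h₀ Ve σ' H1 = Ve (H.getLastD h₀) c := by
          obtain ⟨l, hs⟩ := key H1 hc1 h1
          simp only [val, hs, hpbe]
        rw [e1]
        by_cases h2 : H <+: H2
        · obtain ⟨l, hs⟩ := key H2 hc2 h2
          simp only [val, hs, hpbe]
          exact le_refl _
        · have hcomp : H2 <+: H :=
            (List.prefix_or_prefix_of_prefix hp h1).resolve_right h2
          have hneH : H2 ≠ H := fun e => h2 (e ▸ List.prefix_refl H)
          have hlt : H2.getLastD h₀ < H.getLastD h₀ :=
            myLastD_lt_of_proper_prefix hcons.2.2 hne2 hcomp hneH h₀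
          have h2len : 2 ≤ H.length := by
            have l1 : 0 < H2.length := List.length_pos_iff.mpr hne2
            have l2 : H2.length < H.length := by
              refine lt_of_le_of_ne hcomp.length_le fun e => hneH ?_
              exact List.IsPrefix.eq_of_length hcomp e
            omega
          have hsup := hcon h2len
          obtain ⟨Hs, hHs⟩ := myExists_BR Ve σ (myCons_first hc2)
          have m1 : val h₀ Ve σ H2 ≤ val h₀ Ve σ Hs :=
            hHs.2 H2 ⟨hc2, le_refl _⟩
          have m2 : val h₀ Ve σ Hs ≤ sSup {x : ℝ | ∃ (h : 𝓗) (H' : List 𝓗),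
              h < H.getLastD h₀ ∧ BRs h₀ Ve σ h H' ∧ x = val h₀ Ve σ H'} :=
            le_csSup hbddA ⟨H2.getLastD h₀, Hs, hlt, hHs, rfl⟩
          have e2 : val h₀ Ve σ' H2 = val h₀ Ve σ H2 := by
            simp only [val, hnp H2 h2]
          rw [e2]
          exact le_trans m1 (le_trans m2 hsup)
      · have h2 : ¬ H <+: H2 := fun hx => h1 (hx.trans hp)
        have e1 : val h₀ Ve σ' H1 = val h₀ Ve σ H1 := by
          simp only [val, hnp H1 h1]
        have e2 : val h₀ Ve σ' H2 = val h₀ Ve σ H2 := by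
          simp only [val, hnp H2 h2]
        rw [e1, e2]
        exact hIC H1 H2 hc1 hne2 hp
    -- σ' is an H-deviation
    have hDev : Dev h₀ σ σ' H := by
      refine ⟨fun K hK hlt => ?_, ?_⟩
      · refine hnp K fun hp => ?_
        exact absurd (myLastD_le_of_prefix hK.2.2 hHne hp h₀) hlt.not_ge
      · have hs : σ' H = pb (le_refl (H.getLastD h₀)) c :=
          dif_pos ⟨List.prefix_refl H, le_refl _⟩
        rw [hs]
        exact hceq
    have hreach : Reach h₀ Ve σ H := ⟨_, H, hBR, List.prefix_refl H⟩
    have hmain := hrob H hcons hreach σ' hIC' hDev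
    have hAset : {x : ℝ | ∃ H' : List 𝓗, Cons h₀ H' ∧ H <+: H' ∧
        x = val h₀ Vd σ' H'} = {Vd (H.getLastD h₀) c} := by
      ext x
      simp only [Set.mem_setOf_eq, Set.mem_singleton_iff]
      constructor
      · rintro ⟨H', hc', hp', rfl⟩
        obtain ⟨l, hs⟩ := key H' hc' hp'
        simp only [val, hs, hpbd]
      · rintro rfl
        refine ⟨H, hcons, List.prefix_refl H, ?_⟩
        obtain ⟨l, hs⟩ := key H hcons (List.prefix_refl H)
        simp only [val, hs, hpbd]
    rw [hAset, csInf_singleton] at hmain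
    have hBbdd : BddBelow {x : ℝ | ∃ (h : 𝓗) (H' : List 𝓗),
        BRs h₀ Ve σ h H' ∧ H <+: H' ∧ x = val h₀ Vd σ H'} := by
      refine BddBelow.mono ?_ ((myFinite_cons (h₀ := h₀)).image (val h₀ Vd σ)).bddBelow
      rintro x ⟨h, H', hBR', _, rfl⟩
      exact ⟨H', hBR'.1.1, rfl⟩
    have hBmem : val h₀ Vd σ H ∈ {x : ℝ | ∃ (h : 𝓗) (H' : List 𝓗),
        BRs h₀ Ve σ h H' ∧ H <+: H' ∧ x = val h₀ Vd σ H'} :=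
      ⟨_, H, hBR, List.prefix_refl H, rfl⟩
    exact hmain.trans (csInf_le hBbdd hBmem)
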